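/- For distinct primes p and q and positive integers a, b, one has B(p^a q^b) ≥ min{p^a, q^b}, where B(n) is the maximal height of a monic-free integer polynomial divisor of x^n − 1. -/

import Mathlib

open Polynomial

noncomputable def Height (f : Polynomial ℤ) : ℕ :=
  f.support.sup fun i => (f.coeff i).natAbs

noncomputable def Tsum (f : Polynomial ℤ) : ℕ :=
  ∑ i ∈ f.support, (f.coeff i).natAbs

noncomputable def B (n : ℕ) : ℕ :=
  sSup {h : ℕ | ∃ f : Polynomial ℤ, f ∣ X ^ n - 1 ∧ Height f = h}

open Finset in
lemma XpowsubOne_ne {n : ℕ} (hn : 0 < n) {R : Type*} [CommRing R] [Nontrivial R] :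
    (X ^ n - 1 : R[X]) ≠ 0 := by
  intro h
  have h0 := congrArg (fun f => Polynomial.coeff f 0) h
  simp only [Polynomial.coeff_sub, Polynomial.coeff_X_pow, Polynomial.coeff_one,
    Polynomial.coeff_zero] at h0
  rw [if_neg hn.ne] at h0
  simp at h0

lemma choose_le_two_pow' (d i : ℕ) : d.choose i ≤ 2 ^ d := by
  rcases le_or_gt i d with h | h
  · calc d.choose i ≤ ∑ j ∈ Finset.range (d+1), d.choose j :=
        Finset.single_le_sum (fun _ _ => Nat.zero_le _) (Finset.mem_range.mpr (Nat.lt_succ_of_le h))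
      _ = 2 ^ d := Nat.sum_range_choose d
  · simp [Nat.choose_eq_zero_of_lt h]

lemma coeff_bound_monic {n : ℕ} (hn : 0 < n) {g : ℤ[X]} (hg : g ∣ X ^ n - 1)
    (hm : g.Monic) (i : ℕ) : (g.coeff i).natAbs ≤ 2 ^ n := by
  classical
  have hdeg : g.natDegree ≤ n := by
    have h := Polynomial.natDegree_le_of_dvd hg (XpowsubOne_ne hn)
    have e : (X ^ n - 1 : ℤ[X]) = X ^ n - C 1 := by simp
    rwa [e, Polynomial.natDegree_X_pow_sub_C] at h
  set G : ℚ[X] := g.map (Int.castRingHom ℚ) with hG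
  have hGm : G.Monic := hm.map _
  have hGdvd : G ∣ (X ^ n - 1 : ℚ[X]) := by
    have := Polynomial.map_dvd (Int.castRingHom ℚ) hg
    simpa using this
  have hsplits : Polynomial.Splits (G.map (algebraMap ℚ ℂ)) :=
    IsAlgClosed.splits _
  have hroots : ∀ z ∈ (G.map (algebraMap ℚ ℂ)).roots, ‖z‖ ≤ (1 : ℝ) := by
    intro z hz
    have hdvdC : G.map (algebraMap ℚ ℂ) ∣ (X ^ n - 1 : ℂ[X]) := by
      have := Polynomial.map_dvd (algebraMap ℚ ℂ) hGdvd
      simpa using this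
    have hz' : z ∈ (X ^ n - 1 : ℂ[X]).roots := Multiset.mem_of_le
      (Polynomial.roots.le_of_dvd (XpowsubOne_ne hn) hdvdC) hz
    have hz1 : z ^ n = 1 := by
      have h2 : z ^ n - 1 = 0 := by
        simpa [Polynomial.IsRoot] using Polynomial.isRoot_of_mem_roots hz'
      exact sub_eq_zero.mp h2
    have hnorm : ‖z‖ ^ n = 1 := by rw [← norm_pow, hz1, norm_one]
    by_contra hlt
    push_neg at hlt
    have h3 : (1:ℝ) < ‖z‖ ^ n := one_lt_pow₀ hlt hn.ne'
    rw [hnorm] at h3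
    exact lt_irrefl _ h3
  have hco := Polynomial.coeff_le_of_roots_le (f := algebraMap ℚ ℂ) i hGm hsplits hroots
  have hchoose : (G.natDegree.choose i : ℝ) ≤ (2:ℝ) ^ n := by
    have h1 : G.natDegree.choose i ≤ 2 ^ n := by
      calc G.natDegree.choose i ≤ 2 ^ G.natDegree := choose_le_two_pow' _ _
        _ ≤ 2 ^ n := Nat.pow_le_pow_right (by norm_num) (by
            rwa [hG, (hm.natDegree_map _ : (g.map (Int.castRingHom ℚ)).natDegree = g.natDegree)])
    exact_mod_cast h1
  have hcoeff : ‖(G.map (algebraMap ℚ ℂ)).coeff i‖ = ((g.coeff i).natAbs : ℝ) := by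
    rw [Polynomial.coeff_map, hG, Polynomial.coeff_map]
    have e : ((algebraMap ℚ ℂ) ((Int.castRingHom ℚ) (g.coeff i))) = ((g.coeff i : ℤ) : ℂ) := by
      simp
    rw [e, Nat.cast_natAbs]
    simp [Complex.norm_intCast]
  rw [hcoeff, one_pow, one_mul] at hco
  have hfin : ((g.coeff i).natAbs : ℝ) ≤ (2:ℝ) ^ n := hco.trans hchoose
  exact_mod_cast hfin

lemma coeff_bound {n : ℕ} (hn : 0 < n) {g : ℤ[X]} (hg : g ∣ X ^ n - 1) (i : ℕ) :
    (g.coeff i).natAbs ≤ 2 ^ n := by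
  obtain ⟨h, hh⟩ := hg
  have hlead : IsUnit g.leadingCoeff := by
    have e1 : g.leadingCoeff * h.leadingCoeff = 1 := by
      have e2 := congrArg Polynomial.leadingCoeff hh
      rw [Polynomial.leadingCoeff_mul] at e2
      rw [← e2]
      have e : (X ^ n - 1 : ℤ[X]) = X ^ n - C 1 := by simp
      rw [e]
      exact (Polynomial.monic_X_pow_sub_C _ hn.ne').leadingCoeff
    exact IsUnit.of_mul_eq_one _ e1
  rcases Int.isUnit_iff.mp hlead with h1 | h1
  · exact coeff_bound_monic hn ⟨h, hh⟩ h1 i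
  · have hmon : (-g).Monic := by
      unfold Polynomial.Monic
      rw [Polynomial.leadingCoeff_neg, h1]; ring
    have hd : (-g) ∣ X ^ n - 1 := neg_dvd.mpr ⟨h, hh⟩
    have := coeff_bound_monic hn hd hmon i
    simpa using this

lemma bddAbove_heights {n : ℕ} (hn : 0 < n) :
    BddAbove {h : ℕ | ∃ f : Polynomial ℤ, f ∣ X ^ n - 1 ∧ Height f = h} := by
  refine ⟨2 ^ n, ?_⟩
  rintro h ⟨f, hf, rfl⟩
  exact Finset.sup_le fun i _ => coeff_bound hn hf i

open Finset in
lemma key {m k n : ℕ} (hm : 1 ≤ m) (hk : 1 ≤ k) (hmk : m ≤ k)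
    (hcop : Nat.Coprime m k) (hmn : m ∣ n) (hkn : k ∣ n) (hn : 0 < n) :
    ∃ f : Polynomial ℤ, f ∣ X ^ n - 1 ∧ m ≤ Height f := by
  classical
  set A : Polynomial ℤ := ∑ i ∈ range m, X ^ i with hA
  set Bp : Polynomial ℤ := ∑ i ∈ range k, X ^ i with hB
  have hAc : A = ∏ d ∈ m.divisors.erase 1, cyclotomic d ℤ := by
    rw [hA, Polynomial.prod_cyclotomic_eq_geom_sum hm ℤ]
  have hBc : Bp = ∏ d ∈ k.divisors.erase 1, cyclotomic d ℤ := by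
    rw [hB, Polynomial.prod_cyclotomic_eq_geom_sum hk ℤ]
  have hdisj : Disjoint (m.divisors.erase 1) (k.divisors.erase 1) := by
    rw [Finset.disjoint_left]
    intro d hd1 hd2
    have h1 : d ∣ m := (Nat.mem_divisors.mp (Finset.mem_of_mem_erase hd1)).1
    have h2 : d ∣ k := (Nat.mem_divisors.mp (Finset.mem_of_mem_erase hd2)).1
    have : d ∣ 1 := hcop ▸ Nat.dvd_gcd h1 h2
    exact Finset.ne_of_mem_erase hd1 (Nat.dvd_one.mp this)
  have hsub : (m.divisors.erase 1) ∪ (k.divisors.erase 1) ⊆ n.divisors := by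
    intro d hd
    rcases Finset.mem_union.mp hd with hd | hd
    · exact Nat.mem_divisors.mpr
        ⟨((Nat.mem_divisors.mp (Finset.mem_of_mem_erase hd)).1).trans hmn, hn.ne'⟩
    · exact Nat.mem_divisors.mpr
        ⟨((Nat.mem_divisors.mp (Finset.mem_of_mem_erase hd)).1).trans hkn, hn.ne'⟩
  have hdvd : A * Bp ∣ X ^ n - 1 := by
    rw [hAc, hBc, ← Finset.prod_union hdisj, ← Polynomial.prod_cyclotomic_eq_X_pow_sub_one hn ℤ]
    exact Finset.prod_dvd_prod_of_subset _ _ _ hsub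
  refine ⟨A * Bp, hdvd, ?_⟩
  have hcA : ∀ j, A.coeff j = if j < m then 1 else 0 := by
    intro j
    rw [hA, Polynomial.finset_sum_coeff]
    simp only [Polynomial.coeff_X_pow]
    rw [Finset.sum_ite_eq (range m) j (fun _ => (1:ℤ))]
    simp [Finset.mem_range]
  have hcB : ∀ j, Bp.coeff j = if j < k then 1 else 0 := by
    intro j
    rw [hB, Polynomial.finset_sum_coeff]
    simp only [Polynomial.coeff_X_pow]
    rw [Finset.sum_ite_eq (range k) j (fun _ => (1:ℤ))]
    simp [Finset.mem_range]
  have hcoeff : (A * Bp).coeff (m - 1) = (m : ℤ) := by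
    rw [Polynomial.coeff_mul]
    have hterm : ∀ x ∈ Finset.HasAntidiagonal.antidiagonal (m - 1), A.coeff x.1 * Bp.coeff x.2 = 1 := by
      rintro ⟨x, y⟩ hxy
      rw [Finset.HasAntidiagonal.mem_antidiagonal] at hxy
      have hx : x < m := by omega
      have hy : y < k := by omega
      simp [hcA, hcB, hx, hy]
    rw [Finset.sum_congr rfl hterm, Finset.sum_const, Finset.Nat.card_antidiagonal]
    simp [Nat.sub_add_cancel hm]
  have hmem : m - 1 ∈ (A * Bp).support := by
    rw [Polynomial.mem_support_iff, hcoeff]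
    exact_mod_cast (by omega : m ≠ 0)
  calc m = ((A * Bp).coeff (m - 1)).natAbs := by rw [hcoeff]; simp
    _ ≤ Height (A * Bp) := Finset.le_sup (f := fun i => ((A * Bp).coeff i).natAbs) hmem

theorem stmt_12 (p q : ℕ) (hp : p.Prime) (hq : q.Prime) (hpq : p ≠ q)
    (a b : ℕ) (ha : 0 < a) (hb : 0 < b) :
    min (p ^ a) (q ^ b) ≤ B (p ^ a * q ^ b) := by
  set n := p ^ a * q ^ b with hn
  have hn0 : 0 < n := Nat.mul_pos (Nat.pow_pos hp.pos) (Nat.pow_pos hq.pos)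
  have hcop : Nat.Coprime (p ^ a) (q ^ b) := Nat.Coprime.pow a b ((Nat.coprime_primes hp hq).mpr hpq)
  have h1 : 1 ≤ p ^ a := Nat.one_le_pow _ _ hp.pos
  have h2 : 1 ≤ q ^ b := Nat.one_le_pow _ _ hq.pos
  obtain ⟨f, hf, hHf⟩ : ∃ f : Polynomial ℤ, f ∣ X ^ n - 1 ∧ min (p ^ a) (q ^ b) ≤ Height f := by
    rcases le_total (p ^ a) (q ^ b) with h | h
    · obtain ⟨f, hf, hmf⟩ := key h1 h2 h hcop ⟨q ^ b, rfl⟩ ⟨p ^ a, mul_comm _ _⟩ hn0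
      exact ⟨f, hf, le_trans (min_le_left _ _) hmf⟩
    · obtain ⟨f, hf, hmf⟩ := key h2 h1 h hcop.symm ⟨p ^ a, mul_comm _ _⟩ ⟨q ^ b, rfl⟩ hn0
      exact ⟨f, hf, le_trans (min_le_right _ _) hmf⟩
  exact hHf.trans (le_csSup (bddAbove_heights hn0) ⟨f, hf, rfl⟩)
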